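/- The stalactic congruence ≡_stal on (ℕ⁺)* is a pack-good congruence: it is a pack-congruence (for all words u,v, u ≡_stal v ⟺ pack(u) ≡_stal pack(v) and ev(u) = ev(v)) and it is compatible with restriction to alphabet intervals. -/

import Mathlib

open scoped Classical

/-- Words over the positive integers. -/
abbrev Word : Type := List ℕ+

/-- Evaluation of a word: number of occurrences of each letter. -/
def ev (w : Word) : ℕ+ → ℕ := fun a => w.count a

/-- A monoid congruence on the free monoid `(ℕ⁺)*`. -/
def IsCongruence (r : Word → Word → Prop) : Prop :=
  Equivalence r ∧ ∀ u v u' v', r u v → r u' v' → r (u ++ u') (v ++ v')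

/-- Restriction of a word to the letters belonging to a set `I`. -/
noncomputable def restrictTo (I : Set ℕ+) (w : Word) : Word :=
  w.filter fun a => decide (a ∈ I)

/-- `I` is an interval (order-convex subset) of `ℕ⁺`. -/
def IsIntervalSet (I : Set ℕ+) : Prop :=
  ∀ ⦃a b c : ℕ+⦄, a ∈ I → c ∈ I → a ≤ b → b ≤ c → b ∈ I

/-- Compatibility with restriction to alphabet intervals. -/
def CompatRestrict (r : Word → Word → Prop) : Prop :=
  ∀ I : Set ℕ+, IsIntervalSet I → ∀ u v, r u v → r (restrictTo I u) (restrictTo I v)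

/-- `r` is a `φ`-congruence. -/
def IsPhiCongruence (φ : Word → Word) (r : Word → Word → Prop) : Prop :=
  ∀ u v, r u v ↔ (r (φ u) (φ v) ∧ ev u = ev v)

/-- Standardization. -/
def std (w : Word) : Word :=
  (List.range w.length).map fun i =>
    ⟨((List.range w.length).countP fun j =>
        decide (w.getD j 1 < w.getD i 1 ∨ (w.getD j 1 = w.getD i 1 ∧ j < i))) + 1,
      Nat.succ_pos _⟩

/-- Packing. -/
def pack (w : Word) : Word :=
  w.map fun a => ⟨(w.dedup.countP fun b => decide (b < a)) + 1, Nat.succ_pos _⟩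

theorem parkBad_ex (w : Word) :
    ∃ d : ℕ, 1 ≤ d ∧ (w.countP fun a : ℕ+ => decide ((a : ℕ) ≤ d)) < d :=
  ⟨w.length + 1, Nat.succ_le_succ (Nat.zero_le _), by
    have h : (w.countP fun a : ℕ+ => decide ((a : ℕ) ≤ w.length + 1)) ≤ w.length :=
      List.countP_le_length
    omega⟩

/-- The smallest `d ≥ 1` such that fewer than `d` letters of `w` are `≤ d`. -/
noncomputable def parkBad (w : Word) : ℕ := Nat.find (parkBad_ex w)

/-- One pass of the parkization procedure, with fuel. -/
noncomputable def parkAux : ℕ → Word → Word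
  | 0, w => w
  | f + 1, w =>
    if parkBad w ≤ w.length then
      parkAux f (w.map fun a : ℕ+ => if parkBad w < (a : ℕ) then (a - 1 : ℕ+) else a)
    else w

/-- Parkization. The fuel `(sum of the letters)` always suffices,
since every pass strictly decreases the sum of the letters. -/
noncomputable def park (w : Word) : Word := parkAux (w.map fun a => (a : ℕ)).sum w

/-- Smallest monoid congruence containing `base`. -/
def CongClosure (base : Word → Word → Prop) (u v : Word) : Prop :=
  ∀ r : Word → Word → Prop, IsCongruence r → (∀ x y, base x y → r x y) → r u v

def sylvBase (x y : Word) : Prop :=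
  ∃ (a b c : ℕ+) (v : Word), a ≤ b ∧ b < c ∧
    x = a :: c :: (v ++ [b]) ∧ y = c :: a :: (v ++ [b])

/-- The sylvester congruence. -/
def sylv : Word → Word → Prop := CongClosure sylvBase

def stalBase (x y : Word) : Prop :=
  ∃ (a b : ℕ+) (v : Word), x = b :: a :: (v ++ [b]) ∧ y = a :: b :: (v ++ [b])

/-- The stalactic congruence. -/
def stal : Word → Word → Prop := CongClosure stalBase

def sylvSharpBase (x y : Word) : Prop :=
  ∃ (a b c : ℕ+) (v : Word), a < b ∧ b ≤ c ∧
    x = b :: (v ++ [a, c]) ∧ y = b :: (v ++ [c, a])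

/-- The #-sylvester congruence. -/
def sylvSharp : Word → Word → Prop := CongClosure sylvSharpBase

/-- The taïga congruence: join of the sylvester and stalactic congruences. -/
def taiga : Word → Word → Prop := CongClosure fun u v => sylv u v ∨ stal u v

/-- Planar binary trees with letter labels. -/
inductive BT : Type where
  | leaf : BT
  | node : BT → ℕ+ → BT → BT
deriving DecidableEq

/-- Binary search tree insertion of a letter. -/
def BT.insert : BT → ℕ+ → BT
  | .leaf, l => .node .leaf l .leaf
  | .node L b R, l => if l ≤ b then .node (L.insert l) b R else .node L b (R.insert l)

/-- Binary search tree of a word: insert the letters from right to left. -/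
def bst (w : Word) : BT := w.foldr (fun l t => t.insert l) .leaf

/-- Planar binary trees labelled by a letter and a multiplicity. -/
inductive BSTM : Type where
  | leaf : BSTM
  | node : BSTM → ℕ+ → ℕ+ → BSTM → BSTM   -- left, letter, multiplicity, right
deriving DecidableEq

/-- Insertion of a letter into a binary search tree with multiplicities. -/
def BSTM.insert : BSTM → ℕ+ → BSTM
  | .leaf, l => .node .leaf l 1 .leaf
  | .node L l' k R, l =>
    if l = l' then .node L l' (k + 1) R
    else if l < l' then .node (L.insert l) l' k R
    else .node L l' k (R.insert l)

/-- The `P`-symbol: insert the letters of `w` from right to left. -/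
def Pmap (w : Word) : BSTM := w.foldr (fun l t => t.insert l) .leaf

/-- Letters of a BSTM in left-to-right (infix) order. -/
def BSTM.letters : BSTM → List ℕ+
  | .leaf => []
  | .node L l _ R => L.letters ++ l :: R.letters

/-- The binary search tree property for a BSTM. -/
def BSTM.IsSearchTree : BSTM → Prop
  | .leaf => True
  | .node L l _ R =>
      (∀ x ∈ L.letters, x < l) ∧ (∀ x ∈ R.letters, l < x) ∧
        L.IsSearchTree ∧ R.IsSearchTree

/-- Total multiplicity of a letter in a BSTM. -/
def BSTM.mult : BSTM → ℕ+ → ℕ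
  | .leaf, _ => 0
  | .node L l k R, a => L.mult a + (if a = l then (k : ℕ) else 0) + R.mult a

/-- Size of a BSTM: sum of the multiplicities. -/
def BSTM.size : BSTM → ℕ
  | .leaf => 0
  | .node L _ k R => L.size + (k : ℕ) + R.size

/-- Planar binary trees with multiplicities. -/
inductive BTM : Type where
  | leaf : BTM
  | node : BTM → ℕ+ → BTM → BTM
deriving DecidableEq

/-- Size of a BTM: sum of the multiplicities. -/
def BTM.size : BTM → ℕ
  | .leaf => 0
  | .node L k R => L.size + (k : ℕ) + R.size

/-- Number of nodes of a BTM. -/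
def BTM.numNodes : BTM → ℕ
  | .leaf => 0
  | .node L _ R => L.numNodes + 1 + R.numNodes

/-- Forgetting the letters of a BSTM gives a BTM. -/
def forgetLetters : BSTM → BTM
  | .leaf => .leaf
  | .node L _ k R => .node (forgetLetters L) k (forgetLetters R)

/-- The `B`-symbol: the BTM underlying `P(w)`. -/
def Bmap (w : Word) : BTM := forgetLetters (Pmap w)

/-- A packed word: its set of letters is `{1, …, k}` for some `k`. -/
def IsPacked (w : Word) : Prop := ∀ a ∈ w, ∀ b : ℕ+, b ≤ a → b ∈ w

/-- Number of packed words inserting to the BTM `T`. -/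
noncomputable def fT (T : BTM) : ℕ :=
  Set.ncard {w : Word | IsPacked w ∧ Bmap w = T}

/-- The hook-type product over the subtrees of a BTM. -/
def hookProd : BTM → ℕ
  | .leaf => 1
  | .node L k R =>
      (BTM.node L k R).size * ((k : ℕ) - 1).factorial * hookProd L * hookProd R

/-- Label the nodes of a BTM in infix order starting from a given letter;
returns the labelled tree and the next unused letter. -/
def infixLabelAux : BTM → ℕ+ → BSTM × ℕ+
  | .leaf, n => (.leaf, n)
  | .node L k R, n =>
    let p := infixLabelAux L n
    let q := infixLabelAux R (p.2 + 1)
    (.node p.1 p.2 k q.1, q.2)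

/-- Label the nodes of a BTM by `1, …, k` in infix order. -/
def infixLabel (T : BTM) : BSTM := (infixLabelAux T 1).1


section StalProof

lemma stal_refl' (u : Word) : stal u u := fun _ hr _ => hr.1.refl u
lemma stal_symm' {u v : Word} (h : stal u v) : stal v u := fun r hr hb => hr.1.symm (h r hr hb)
lemma stal_trans' {u v w : Word} (h1 : stal u v) (h2 : stal v w) : stal u w :=
  fun r hr hb => hr.1.trans (h1 r hr hb) (h2 r hr hb)
lemma stal_append' {u v u' v' : Word} (h : stal u v) (h' : stal u' v') :
    stal (u ++ u') (v ++ v') := fun r hr hb => hr.2 _ _ _ _ (h r hr hb) (h' r hr hb)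
lemma stal_ofBase {x y : Word} (h : stalBase x y) : stal x y := fun _ _ hb => hb x y h
lemma stal_isCong : IsCongruence stal :=
  ⟨⟨stal_refl', fun h => stal_symm' h, fun h h' => stal_trans' h h'⟩,
   fun _ _ _ _ h h' => stal_append' h h'⟩

lemma stal_move (x : ℕ+) (q : Word) :
    ∀ p : Word, stal (x :: (p ++ x :: q)) (p ++ x :: x :: q) := by
  intro p
  induction p with
  | nil => exact stal_refl' _
  | cons c p ih =>
    have h1 : stal ((x :: c :: (p ++ [x])) ++ q) ((c :: x :: (p ++ [x])) ++ q) :=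
      stal_append' (stal_ofBase ⟨c, x, p, rfl, rfl⟩) (stal_refl' q)
    have h2 : stal ([c] ++ (x :: (p ++ x :: q))) ([c] ++ (p ++ x :: x :: q)) :=
      stal_append' (stal_refl' [c]) ih
    simp only [List.append_assoc, List.cons_append, List.singleton_append,
      List.nil_append] at h1 h2 ⊢
    exact stal_trans' h1 h2

/-- Normal-form helper: concatenate the blocks `a^(count a w)` for `a` in `L`. -/
def nfAux (w : Word) : List ℕ+ → Word
  | [] => []
  | a :: L => List.replicate (w.count a) a ++ nfAux w L

lemma nfAux_cons (w : Word) (a : ℕ+) (L : List ℕ+) :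
    nfAux w (a :: L) = List.replicate (w.count a) a ++ nfAux w L := rfl

lemma nfAux_congr {w w' : Word} : ∀ {L : List ℕ+},
    (∀ a ∈ L, w.count a = w'.count a) → nfAux w L = nfAux w' L
  | [], _ => rfl
  | a :: L, h => by
    rw [nfAux_cons, nfAux_cons, h a (by simp),
      nfAux_congr (fun b hb => h b (by simp [hb]))]

lemma nfAux_append (w : Word) : ∀ (A B : List ℕ+),
    nfAux w (A ++ B) = nfAux w A ++ nfAux w B
  | [], B => rfl
  | a :: A, B => by
    rw [List.cons_append, nfAux_cons, nfAux_cons, nfAux_append w A B, List.append_assoc]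

/-- The stalactic normal form of a word. -/
def nf (w : Word) : Word := nfAux w w.dedup

lemma stal_nf : ∀ w : Word, stal w (nf w) := by
  intro w
  induction w with
  | nil => exact stal_refl' _
  | cons x t ih =>
    have h1 : stal (x :: t) (x :: nf t) := stal_append' (stal_refl' [x]) ih
    refine stal_trans' h1 ?_
    by_cases hx : x ∈ t
    · obtain ⟨A, B, hAB⟩ := List.append_of_mem (List.mem_dedup.2 hx)
      have hnd := List.nodup_dedup t
      rw [hAB] at hnd
      obtain ⟨-, hndB, hdisj⟩ := List.nodup_append.1 hnd
      have hxA : x ∉ A := fun h => hdisj x h x (by simp) rfl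
      have hxB : x ∉ B := (List.nodup_cons.1 hndB).1
      have hcA : ∀ a ∈ A, (x :: t).count a = t.count a := fun a ha => by
        have hxa : x ≠ a := fun h => hxA (h ▸ ha)
        simp [List.count_cons, hxa]
      have hcB : ∀ a ∈ B, (x :: t).count a = t.count a := fun a ha => by
        have hxa : x ≠ a := fun h => hxB (h ▸ ha)
        simp [List.count_cons, hxa]
      have hk : 0 < t.count x := List.count_pos_iff.2 hx
      obtain ⟨k, hk'⟩ : ∃ k, t.count x = k + 1 :=
        ⟨t.count x - 1, (Nat.succ_pred_eq_of_pos hk).symm⟩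
      have e1 : nf t = nfAux t A ++ (x :: (List.replicate k x ++ nfAux t B)) := by
        rw [nf, hAB, nfAux_append, nfAux_cons, hk', List.replicate_succ, List.cons_append]
      have e2 : nf (x :: t) = nfAux t A ++ (x :: x :: (List.replicate k x ++ nfAux t B)) := by
        rw [nf, List.dedup_cons_of_mem hx, hAB, nfAux_append, nfAux_congr hcA, nfAux_cons,
          nfAux_congr hcB, List.count_cons_self, hk', List.replicate_succ, List.replicate_succ,
          List.cons_append, List.cons_append]
      rw [e1, e2]
      exact stal_move x (List.replicate k x ++ nfAux t B) (nfAux t A)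
    · have e : nf (x :: t) = x :: nf t := by
        have hc : (x :: t).count x = 1 := by
          simp [List.count_cons_self, List.count_eq_zero_of_not_mem hx]
        have hcd : nfAux (x :: t) t.dedup = nfAux t t.dedup :=
          nfAux_congr (fun a ha => by
            have hxa : x ≠ a := fun h => hx (h ▸ List.mem_dedup.1 ha)
            simp [List.count_cons, hxa])
        rw [nf, List.dedup_cons_of_notMem hx, nfAux_cons, hc, hcd, nf]
        rfl
      rw [e]
      exact stal_refl' _

lemma dedup_filter (p : ℕ+ → Bool) : ∀ w : Word, (w.filter p).dedup = w.dedup.filter p := by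
  intro w
  induction w with
  | nil => rfl
  | cons x t ih =>
    by_cases hpx : p x = true
    · by_cases hx : x ∈ t
      · rw [List.filter_cons, if_pos hpx, List.dedup_cons_of_mem (List.mem_filter.2 ⟨hx, hpx⟩),
          List.dedup_cons_of_mem hx, ih]
      · have hnf : x ∉ List.filter p t := fun h => hx (List.mem_filter.1 h).1
        rw [List.filter_cons, if_pos hpx, List.dedup_cons_of_notMem hnf,
          List.dedup_cons_of_notMem hx, List.filter_cons, if_pos hpx, ih]
    · rw [List.filter_cons, if_neg hpx, ih]
      by_cases hx : x ∈ t
      · rw [List.dedup_cons_of_mem hx]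
      · rw [List.dedup_cons_of_notMem hx, List.filter_cons, if_neg hpx]

lemma dedup_append' (u v : Word) :
    (u ++ v).dedup = u.dedup.filter (fun a => decide (a ∉ v)) ++ v.dedup := by
  induction u with
  | nil => simp
  | cons x t ih =>
    by_cases hxv : x ∈ v
    · have h1 : x ∈ t ++ v := by simp [hxv]
      rw [List.cons_append, List.dedup_cons_of_mem h1, ih]
      by_cases hxt : x ∈ t
      · rw [List.dedup_cons_of_mem hxt]
      · rw [List.dedup_cons_of_notMem hxt, List.filter_cons, if_neg (by simp [hxv])]
    · by_cases hxt : x ∈ t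
      · rw [List.cons_append, List.dedup_cons_of_mem (by simp [hxt] : x ∈ t ++ v),
          List.dedup_cons_of_mem hxt, ih]
      · have h1 : x ∉ t ++ v := by simp [hxt, hxv]
        rw [List.cons_append, List.dedup_cons_of_notMem h1, List.dedup_cons_of_notMem hxt,
          List.filter_cons, if_pos (by simp [hxv]), ih, List.cons_append]

/-- The invariant characterizing the stalactic congruence: same evaluation
(permutation) and same word of last occurrences (`dedup`). -/
def Rrel (u v : Word) : Prop := u.Perm v ∧ u.dedup = v.dedup

lemma Rrel_isCong : IsCongruence Rrel := by
  constructor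
  · exact ⟨fun u => ⟨List.Perm.refl u, rfl⟩, fun h => ⟨h.1.symm, h.2.symm⟩,
      fun h h' => ⟨h.1.trans h'.1, h.2.trans h'.2⟩⟩
  · rintro u v u' v' ⟨h1, h2⟩ ⟨h1', h2'⟩
    refine ⟨h1.append h1', ?_⟩
    rw [dedup_append', dedup_append', h2, h2']
    congr 1
    exact List.filter_congr (fun a _ => by
      simp only [decide_eq_decide]
      exact not_congr h1'.mem_iff)

lemma Rrel_base : ∀ x y, stalBase x y → Rrel x y := by
  rintro x y ⟨a, b, v, rfl, rfl⟩
  refine ⟨List.Perm.swap a b _, ?_⟩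
  have hb : b ∈ v ++ [b] := by simp
  by_cases ha : a ∈ v ++ [b]
  · rw [List.dedup_cons_of_mem (by simp [ha] : b ∈ a :: (v ++ [b])),
      List.dedup_cons_of_mem ha,
      List.dedup_cons_of_mem (by simp [ha] : a ∈ b :: (v ++ [b])),
      List.dedup_cons_of_mem hb]
  · have hab : a ≠ b := fun h => ha (h ▸ hb)
    rw [List.dedup_cons_of_mem (by simp : b ∈ a :: (v ++ [b])),
      List.dedup_cons_of_notMem ha,
      List.dedup_cons_of_notMem (by simp [hab, ha] : a ∉ b :: (v ++ [b])),
      List.dedup_cons_of_mem hb]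

lemma ev_eq_iff_perm {u v : Word} : ev u = ev v ↔ u.Perm v := by
  constructor
  · intro h
    rw [List.perm_iff_count]
    intro a
    exact congrFun h a
  · intro h
    funext a
    exact h.count_eq a

lemma stal_iff_Rrel (u v : Word) : stal u v ↔ Rrel u v := by
  constructor
  · intro h
    exact h Rrel Rrel_isCong Rrel_base
  · rintro ⟨h1, h2⟩
    have e : nf u = nf v := by
      rw [nf, nf, h2]
      exact nfAux_congr (fun a _ => h1.count_eq a)
    exact stal_trans' (stal_nf u) (e ▸ stal_symm' (stal_nf v))

/-- The letter-renaming function underlying `pack`. -/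
def pfn (w : Word) (a : ℕ+) : ℕ+ := ⟨(w.dedup.countP fun b => decide (b < a)) + 1, Nat.succ_pos _⟩

lemma pack_eq_map (w : Word) : pack w = w.map (pfn w) := rfl

lemma pfn_congr {u v : Word} (h : u.Perm v) : pfn u = pfn v := by
  funext a
  apply Subtype.ext
  show (u.dedup.countP fun b => decide (b < a)) + 1 = (v.dedup.countP fun b => decide (b < a)) + 1
  rw [h.dedup.countP_eq]

lemma pfn_lt {w : Word} {a a' : ℕ+} (ha : a ∈ w) (h : a < a') :
    (w.dedup.countP fun b => decide (b < a)) < w.dedup.countP fun b => decide (b < a') := by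
  obtain ⟨s, t, hst⟩ := List.append_of_mem (List.mem_dedup.2 ha)
  rw [hst, List.countP_append, List.countP_append, List.countP_cons, List.countP_cons]
  have h1 : List.countP (fun b => decide (b < a)) s ≤ List.countP (fun b => decide (b < a')) s :=
    List.countP_mono_left (fun x _ hx => by
      simp only [decide_eq_true_eq] at hx ⊢
      exact hx.trans h)
  have h2 : List.countP (fun b => decide (b < a)) t ≤ List.countP (fun b => decide (b < a')) t :=
    List.countP_mono_left (fun x _ hx => by
      simp only [decide_eq_true_eq] at hx ⊢
      exact hx.trans h)
  simp only [decide_eq_true_eq, lt_irrefl a, if_false, h, if_true]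
  omega

lemma pfn_injOn {w : Word} {a a' : ℕ+} (ha : a ∈ w) (ha' : a' ∈ w)
    (h : pfn w a = pfn w a') : a = a' := by
  have key : ∀ {x y : ℕ+}, x ∈ w → x < y → pfn w x ≠ pfn w y := by
    intro x y hx hxy heq
    have hlt := pfn_lt hx hxy
    have h2 : (w.dedup.countP fun b => decide (b < x)) + 1
        = (w.dedup.countP fun b => decide (b < y)) + 1 :=
      congrArg (fun z : ℕ+ => (z : ℕ)) heq
    omega
  rcases lt_trichotomy a a' with hlt | he | hgt
  · exact absurd h (key ha hlt)
  · exact he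
  · exact absurd h.symm (key ha' hgt)

lemma dedup_map {f : ℕ+ → ℕ+} {S : Word}
    (hf : ∀ a ∈ S, ∀ b ∈ S, f a = f b → a = b) :
    ∀ {w : Word}, (∀ a ∈ w, a ∈ S) → (w.map f).dedup = w.dedup.map f := by
  intro w
  induction w with
  | nil => simp
  | cons x t ih =>
    intro hw
    have hmem : f x ∈ t.map f ↔ x ∈ t := by
      constructor
      · intro h
        obtain ⟨y, hy, hxy⟩ := List.mem_map.1 h
        rwa [hf y (hw y (by simp [hy])) x (hw x (by simp)) hxy] at hy
      · intro h
        exact List.mem_map_of_mem (f := f) h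
    by_cases hx : x ∈ t
    · rw [List.map_cons, List.dedup_cons_of_mem (hmem.2 hx), List.dedup_cons_of_mem hx,
        ih (fun a ha => hw a (by simp [ha]))]
    · rw [List.map_cons, List.dedup_cons_of_notMem (fun h => hx (hmem.1 h)),
        List.dedup_cons_of_notMem hx, List.map_cons, ih (fun a ha => hw a (by simp [ha]))]

lemma map_cancel {f : ℕ+ → ℕ+} {S : Word}
    (hf : ∀ a ∈ S, ∀ b ∈ S, f a = f b → a = b) :
    ∀ {L1 L2 : List ℕ+}, (∀ a ∈ L1, a ∈ S) → (∀ a ∈ L2, a ∈ S) →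
      L1.map f = L2.map f → L1 = L2 := by
  intro L1
  induction L1 with
  | nil =>
    intro L2 _ _ h
    cases L2 <;> simp_all
  | cons x t ih =>
    intro L2 h1 h2 h
    cases L2 with
    | nil => simp at h
    | cons y s =>
      simp only [List.map_cons, List.cons.injEq] at h
      have hxy := hf x (h1 x (by simp)) y (h2 y (by simp)) h.1
      rw [hxy, ih (fun a ha => h1 a (by simp [ha])) (fun a ha => h2 a (by simp [ha])) h.2]

lemma stal_phi : IsPhiCongruence pack stal := by
  intro u v
  constructor
  · intro h
    obtain ⟨h1, h2⟩ := (stal_iff_Rrel u v).1 h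
    refine ⟨?_, ev_eq_iff_perm.2 h1⟩
    rw [stal_iff_Rrel]
    have hf := pfn_congr h1
    refine ⟨?_, ?_⟩
    · rw [pack_eq_map, pack_eq_map, ← hf]
      exact h1.map _
    · rw [pack_eq_map, pack_eq_map, ← hf,
        dedup_map (S := u) (fun a ha b hb => pfn_injOn ha hb) (fun a ha => ha),
        dedup_map (S := u) (fun a ha b hb => pfn_injOn ha hb) (fun a ha => h1.mem_iff.2 ha), h2]
  · rintro ⟨hp, he⟩
    have h1 : u.Perm v := ev_eq_iff_perm.1 he
    rw [stal_iff_Rrel]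
    refine ⟨h1, ?_⟩
    obtain ⟨hp1, hp2⟩ := (stal_iff_Rrel _ _).1 hp
    have hf := pfn_congr h1
    rw [pack_eq_map, pack_eq_map, ← hf,
      dedup_map (S := u) (fun a ha b hb => pfn_injOn ha hb) (fun a ha => ha),
      dedup_map (S := u) (fun a ha b hb => pfn_injOn ha hb) (fun a ha => h1.mem_iff.2 ha)] at hp2
    exact map_cancel (S := u) (fun a ha b hb => pfn_injOn ha hb)
      (fun a ha => List.mem_dedup.1 ha) (fun a ha => h1.mem_iff.2 (List.mem_dedup.1 ha)) hp2

lemma stal_compat : CompatRestrict stal := by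
  intro I _ u v h
  obtain ⟨h1, h2⟩ := (stal_iff_Rrel u v).1 h
  rw [stal_iff_Rrel]
  refine ⟨h1.filter _, ?_⟩
  show (u.filter fun a => decide (a ∈ I)).dedup = (v.filter fun a => decide (a ∈ I)).dedup
  rw [dedup_filter, dedup_filter, h2]

end StalProof

theorem stal_is_packGood :
    IsCongruence stal ∧ IsPhiCongruence pack stal ∧ CompatRestrict stal :=
  ⟨stal_isCong, stal_phi, stal_compat⟩
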